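/- Let f : [0,∞) → [0,∞) be measurable with ∫₀^∞ f ds < ∞, and suppose there exist α ∈ (1,2), ζ > 0, T* > 0 such that (∫ₛ^∞ f(τ) dτ)^α ≤ ζ f(s) for a.e. s > T*. Then √f ∈ L¹(T*, ∞). -/

import Mathlib

open MeasureTheory Set

/-- From the tail inequality for the dissipation rate `f`, conclude `√f ∈ L¹(T*,∞)`. -/
theorem stmt12 (f : ℝ → ℝ) (hfm : Measurable f) (hfnn : ∀ t, 0 ≤ t → 0 ≤ f t)
    (hfint : IntegrableOn f (Set.Ici 0))
    (α ζ Tstar : ℝ) (hα1 : 1 < α) (hα2 : α < 2) (hζ : 0 < ζ) (hT : 0 < Tstar)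
    (htail : ∀ᵐ s ∂(volume.restrict (Set.Ioi Tstar)),
      (∫ τ in Set.Ioi s, f τ) ^ α ≤ ζ * f s) :
    IntegrableOn (fun s => Real.sqrt (f s)) (Set.Ioi Tstar) := by
  set F : ℝ → ℝ := fun s => ∫ τ in Set.Ioi s, f τ with hF
  have hα0 : (0:ℝ) < α := lt_trans one_pos hα1
  -- integrability on subsets
  have hfIoi : ∀ s : ℝ, 0 ≤ s → IntegrableOn f (Set.Ioi s) :=
    fun s hs => hfint.mono_set (fun x hx => le_trans hs (le_of_lt hx))
  have hfIoc : ∀ s t : ℝ, 0 ≤ s → IntegrableOn f (Set.Ioc s t) :=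
    fun s t hs => hfint.mono_set (fun x hx => le_trans hs (le_of_lt hx.1))
  -- splitting
  have hFsplit : ∀ s t : ℝ, 0 ≤ s → s ≤ t → F s = (∫ τ in Set.Ioc s t, f τ) + F t := by
    intro s t hs hst
    rw [hF]
    simp only
    rw [← Set.Ioc_union_Ioi_eq_Ioi hst,
      setIntegral_union (Set.Ioc_disjoint_Ioi le_rfl) measurableSet_Ioi
        (hfIoc s t hs) (hfIoi t (le_trans hs hst))]
  have hIocnn : ∀ s t : ℝ, 0 ≤ s → 0 ≤ ∫ τ in Set.Ioc s t, f τ := by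
    intro s t hs
    exact setIntegral_nonneg measurableSet_Ioc (fun x hx => hfnn x (le_trans hs (le_of_lt hx.1)))
  have hFnn : ∀ t : ℝ, 0 ≤ t → 0 ≤ F t := by
    intro t ht
    exact setIntegral_nonneg measurableSet_Ioi (fun x hx => hfnn x (le_trans ht (le_of_lt hx)))
  have hFanti : ∀ s t : ℝ, 0 ≤ s → s ≤ t → F t ≤ F s := by
    intro s t hs hst
    rw [hFsplit s t hs hst]
    linarith [hIocnn s t hs]
  -- upper bound on Ioc integral by F
  have hIocF : ∀ s t : ℝ, 0 ≤ s → s ≤ t → (∫ τ in Set.Ioc s t, f τ) ≤ F s := by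
    intro s t hs hst
    rw [hFsplit s t hs hst]
    linarith [hFnn t (le_trans hs hst)]
  -- key inequality (★)
  have hkey : ∀ s t : ℝ, Tstar ≤ s → s ≤ t → (t - s) * F t ^ α ≤ ζ * F s := by
    intro s t hs hst
    have hs0 : (0:ℝ) ≤ s := le_of_lt (lt_of_lt_of_le hT hs)
    have ht0 : (0:ℝ) ≤ t := le_trans hs0 hst
    have hae : ∀ᵐ τ ∂(volume.restrict (Set.Ioc s t)), F t ^ α / ζ ≤ f τ := by
      have h1 : ∀ᵐ τ ∂(volume.restrict (Set.Ioc s t)), F τ ^ α ≤ ζ * f τ :=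
        ae_restrict_of_ae_restrict_of_subset
          (fun x hx => lt_of_lt_of_le (lt_of_le_of_lt hs hx.1) le_rfl) htail
      filter_upwards [h1, ae_restrict_mem measurableSet_Ioc] with τ hτ hmem
      have hFτ : F t ^ α ≤ F τ ^ α :=
        Real.rpow_le_rpow (hFnn t ht0)
          (hFanti τ t (le_trans hs0 (le_of_lt hmem.1)) hmem.2) (le_of_lt hα0)
      rw [div_le_iff₀ hζ]
      calc F t ^ α ≤ F τ ^ α := hFτ
        _ ≤ ζ * f τ := hτ
        _ = f τ * ζ := mul_comm _ _
    have hint : (∫ _ in Set.Ioc s t, F t ^ α / ζ) ≤ ∫ τ in Set.Ioc s t, f τ :=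
      integral_mono_ae (integrableOn_const measure_Ioc_lt_top.ne)
        (hfIoc s t hs0) hae
    rw [setIntegral_const, Real.volume_real_Ioc_of_le hst, smul_eq_mul] at hint
    have h2 : (t - s) * (F t ^ α / ζ) ≤ F s := le_trans hint (hIocF s t hs0 hst)
    calc (t - s) * F t ^ α = ((t - s) * (F t ^ α / ζ)) * ζ := by field_simp
      _ ≤ F s * ζ := by
          apply mul_le_mul_of_nonneg_right h2 (le_of_lt hζ)
      _ = ζ * F s := mul_comm _ _
  -- bootstrap step
  have hboot : ∀ q : ℝ, 0 ≤ q → (∃ C : ℝ, 0 < C ∧ ∀ t, Tstar ≤ t → F t ≤ C * t ^ (-q)) →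
      ∃ C : ℝ, 0 < C ∧ ∀ t, Tstar ≤ t → F t ≤ C * t ^ (-((1+q)/α)) := by
    rintro q hq ⟨C, hC, hbd⟩
    have hα0' : α ≠ 0 := ne_of_gt hα0
    set q' : ℝ := (1+q)/α with hq'def
    have hq'0 : 0 ≤ q' := div_nonneg (by linarith) (le_of_lt hα0)
    set K : ℝ := 2 ^ (1+q) * ζ * C with hKdef
    have hK : 0 < K := by
      have := Real.rpow_pos_of_pos (by norm_num : (0:ℝ) < 2) (1+q)
      positivity
    have hFT : 0 ≤ F Tstar := hFnn Tstar (le_of_lt hT)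
    refine ⟨K ^ (1/α) + (F Tstar + 1) * (2*Tstar) ^ q', ?_, ?_⟩
    · have h1 : 0 < (F Tstar + 1) * (2*Tstar) ^ q' := by
        have := Real.rpow_pos_of_pos (by linarith : (0:ℝ) < 2*Tstar) q'
        positivity
      have h2 : 0 ≤ K ^ (1/α) := Real.rpow_nonneg (le_of_lt hK) _
      linarith
    · intro t ht
      have ht0 : (0:ℝ) < t := lt_of_lt_of_le hT ht
      have htq' : 0 < t ^ (-q') := Real.rpow_pos_of_pos ht0 _
      rcases le_total t (2*Tstar) with hcase | hcase
      · -- small t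
        have h2T : (0:ℝ) < 2*Tstar := by linarith
        have hmono : (2*Tstar) ^ (-q') ≤ t ^ (-q') :=
          Real.rpow_le_rpow_of_nonpos ht0 hcase (neg_nonpos.2 hq'0)
        have hFt : F t ≤ F Tstar + 1 := by
          have := hFanti Tstar t (le_of_lt hT) ht
          linarith
        have key : (F Tstar + 1) * (2*Tstar) ^ q' * ((2*Tstar) ^ (-q')) = F Tstar + 1 := by
          rw [Real.rpow_neg (le_of_lt h2T), mul_assoc,
            mul_inv_cancel₀ (ne_of_gt (Real.rpow_pos_of_pos h2T q')), mul_one]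
        have h3 : F Tstar + 1 ≤ (F Tstar + 1) * (2*Tstar) ^ q' * t ^ (-q') := by
          calc F Tstar + 1 = (F Tstar + 1) * (2*Tstar) ^ q' * ((2*Tstar) ^ (-q')) := key.symm
            _ ≤ (F Tstar + 1) * (2*Tstar) ^ q' * t ^ (-q') := by
                apply mul_le_mul_of_nonneg_left hmono
                positivity
        have h4 : 0 ≤ K ^ (1/α) * t ^ (-q') := by
          have := Real.rpow_nonneg (le_of_lt hK) (1/α)
          positivity
        calc F t ≤ F Tstar + 1 := hFt
          _ ≤ (F Tstar + 1) * (2*Tstar) ^ q' * t ^ (-q') := h3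
          _ ≤ (K ^ (1/α) + (F Tstar + 1) * (2*Tstar) ^ q') * t ^ (-q') := by nlinarith
      · -- large t
        have hhalf : Tstar ≤ t/2 := by linarith
        have hh0 : (0:ℝ) < t/2 := lt_of_lt_of_le hT hhalf
        have hk := hkey (t/2) t hhalf (by linarith)
        have hb := hbd (t/2) hhalf
        have hfa : (t - t/2) * F t ^ α ≤ ζ * (C * (t/2) ^ (-q)) := by
          calc (t - t/2) * F t ^ α ≤ ζ * F (t/2) := hk
            _ ≤ ζ * (C * (t/2) ^ (-q)) := by
                apply mul_le_mul_of_nonneg_left hb (le_of_lt hζ)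
        have hts : t - t/2 = t/2 := by ring
        rw [hts] at hfa
        -- F t ^ α ≤ K * t ^ (-(1+q))
        have hpow : F t ^ α ≤ K * t ^ (-(1+q)) := by
          have h5 : F t ^ α ≤ ζ * C * (t/2) ^ (-(1+q)) := by
            have h6 : (t/2) ^ (-(1+q)) = (t/2) ^ (-q) * (t/2)⁻¹ := by
              rw [← Real.rpow_neg_one (t/2), ← Real.rpow_add hh0]
              ring_nf
            rw [h6]
            have hmul := mul_le_mul_of_nonneg_right hfa (le_of_lt (inv_pos.2 hh0))
            calc F t ^ α = (t/2 * F t ^ α) * (t/2)⁻¹ := by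
                  field_simp
              _ ≤ ζ * (C * (t/2) ^ (-q)) * (t/2)⁻¹ := hmul
              _ = ζ * C * ((t/2) ^ (-q) * (t/2)⁻¹) := by ring
          have h7 : (t/2) ^ (-(1+q)) = 2 ^ (1+q) * t ^ (-(1+q)) := by
            rw [Real.div_rpow (le_of_lt ht0) (by norm_num : (0:ℝ) ≤ 2),
              Real.rpow_neg (le_of_lt ht0), Real.rpow_neg (by norm_num : (0:ℝ) ≤ 2)]
            field_simp
          calc F t ^ α ≤ ζ * C * (t/2) ^ (-(1+q)) := h5
            _ = K * t ^ (-(1+q)) := by rw [h7, hKdef]; ring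
        -- take 1/α power
        have h8 : F t = (F t ^ α) ^ (1/α) := by
          rw [← Real.rpow_mul (hFnn t (le_of_lt ht0)), mul_one_div, div_self hα0',
            Real.rpow_one]
        have h9 : (F t ^ α) ^ (1/α) ≤ (K * t ^ (-(1+q))) ^ (1/α) :=
          Real.rpow_le_rpow (Real.rpow_nonneg (hFnn t (le_of_lt ht0)) α) hpow
            (by positivity)
        have h10 : (K * t ^ (-(1+q))) ^ (1/α) = K ^ (1/α) * t ^ (-q') := by
          rw [Real.mul_rpow (le_of_lt hK) (le_of_lt (Real.rpow_pos_of_pos ht0 _))]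
          congr 1
          rw [← Real.rpow_mul (le_of_lt ht0)]
          congr 1
          rw [hq'def]
          field_simp
        have h11 : 0 ≤ (F Tstar + 1) * (2*Tstar) ^ q' * t ^ (-q') := by
          have : (0:ℝ) < 2*Tstar := by linarith
          have := Real.rpow_pos_of_pos this q'
          positivity
        calc F t = (F t ^ α) ^ (1/α) := h8
          _ ≤ (K * t ^ (-(1+q))) ^ (1/α) := h9
          _ = K ^ (1/α) * t ^ (-q') := h10
          _ ≤ (K ^ (1/α) + (F Tstar + 1) * (2*Tstar) ^ q') * t ^ (-q') := by nlinarith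
  -- iterate the bootstrap to reach an exponent q > 1
  have hα1' : (0:ℝ) < α - 1 := by linarith
  set L : ℝ := 1/(α-1) with hLdef
  have hL1 : 1 < L := by
    rw [hLdef, lt_div_iff₀ hα1']
    linarith
  have hL0 : 0 < L := lt_trans one_pos hL1
  have hLα : L * (α - 1) = 1 := by
    rw [hLdef]
    field_simp
  have hQ : ∀ n : ℕ, ∃ q : ℝ, 0 ≤ q ∧ L - q = L/α^n ∧
      ∃ C, 0 < C ∧ ∀ t, Tstar ≤ t → F t ≤ C * t^(-q) := by
    intro n
    induction n with
    | zero =>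
      refine ⟨0, le_rfl, by simp, F Tstar + 1, by linarith [hFnn Tstar (le_of_lt hT)], ?_⟩
      intro t ht
      rw [neg_zero, Real.rpow_zero, mul_one]
      linarith [hFanti Tstar t (le_of_lt hT) ht]
    | succ n ih =>
      obtain ⟨q, hq0, hqL, hCex⟩ := ih
      refine ⟨(1+q)/α, div_nonneg (by linarith) (le_of_lt hα0), ?_, hboot q hq0 hCex⟩
      have hα0' : α ≠ 0 := ne_of_gt hα0
      have step : L - (1+q)/α = (L - q)/α := by
        field_simp
        nlinarith [hLα]
      rw [step, hqL, pow_succ, ← div_div]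
  obtain ⟨n, hn⟩ := pow_unbounded_of_one_lt (L/(L-1)) hα1
  obtain ⟨q, hq0, hqL, C, hC, hbd⟩ := hQ n
  have hq1 : 1 < q := by
    have hden : (0:ℝ) < L/(L-1) := div_pos hL0 (by linarith)
    have h1 : L/α^n < L/(L/(L-1)) := div_lt_div_of_pos_left hL0 hden hn
    have h2 : L/(L/(L-1)) = L - 1 := by
      rw [div_div_eq_mul_div, mul_comm, mul_div_assoc, div_self (ne_of_gt hL0), mul_one]
    rw [h2] at h1
    linarith
  clear hqL hQ hboot hkey htail hn hL1 hL0 hLα hα1'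
  -- now finish: F t ≤ C * t^(-q) with q > 1
  set r : ℝ := (1+q)/2 with hrdef
  have hr1 : 1 < r := by rw [hrdef]; linarith
  have hrq : r < q := by rw [hrdef]; linarith
  have hr0 : 0 < r := lt_trans one_pos hr1
  -- weight integrability
  have hinv : IntegrableOn (fun s : ℝ => s^(-r)) (Set.Ioi Tstar) :=
    integrableOn_Ioi_rpow_of_lt (by linarith) hT
  have hrm : Measurable (fun s : ℝ => s ^ r) := by fun_prop
  have hgIoc : ∀ a b : ℝ, Tstar ≤ a → IntegrableOn (fun s => s^r * f s) (Set.Ioc a b) := by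
    intro a b ha
    have ha0 : (0:ℝ) ≤ a := le_trans (le_of_lt hT) ha
    apply Integrable.bdd_mul (c := |b| ^ r) (hfIoc a b ha0) hrm.aestronglyMeasurable
    rw [ae_restrict_iff' measurableSet_Ioc]
    filter_upwards with x hx
    rw [Real.norm_eq_abs, abs_of_nonneg (Real.rpow_nonneg (le_trans ha0 (le_of_lt hx.1)) r)]
    exact Real.rpow_le_rpow (le_trans ha0 (le_of_lt hx.1)) (le_trans hx.2 (le_abs_self b))
      (le_of_lt hr0)
  set x0 : ℝ := 2 ^ (r - q) with hx0def
  have hx01 : x0 < 1 := Real.rpow_lt_one_of_one_lt_of_neg one_lt_two (by linarith)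
  have hx00 : 0 < x0 := Real.rpow_pos_of_pos two_pos _
  set D : ℝ := 2^r * C * Tstar^(r-q) with hDdef
  have hD0 : 0 < D := by
    have h1 := Real.rpow_pos_of_pos (show (0:ℝ) < 2 by norm_num) r
    have h2 := Real.rpow_pos_of_pos hT (r-q)
    positivity
  set I : ℝ := D * (1-x0)⁻¹ with hIdef
  have hI0 : 0 < I := mul_pos hD0 (inv_pos.2 (by linarith))
  -- dyadic piece bound
  have hpiece : ∀ a : ℝ, Tstar ≤ a →
      (∫ s in Set.Ioc a (2*a), s^r * f s) ≤ (2*a)^r * (C * a^(-q)) := by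
    intro a ha
    have ha0 : (0:ℝ) < a := lt_of_lt_of_le hT ha
    have h2a : a ≤ 2*a := by linarith
    have h2ar : (0:ℝ) ≤ (2*a)^r := Real.rpow_nonneg (by linarith) r
    have hmono : (∫ s in Set.Ioc a (2*a), s^r * f s)
        ≤ ∫ s in Set.Ioc a (2*a), (2*a)^r * f s := by
      apply integral_mono_ae (hgIoc a (2*a) ha) ((hfIoc a (2*a) (le_of_lt ha0)).const_mul _)
      rw [Filter.EventuallyLE, ae_restrict_iff' measurableSet_Ioc]
      filter_upwards with x hx
      apply mul_le_mul_of_nonneg_right _ (hfnn x (le_trans (le_of_lt ha0) (le_of_lt hx.1)))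
      exact Real.rpow_le_rpow (le_trans (le_of_lt ha0) (le_of_lt hx.1)) hx.2 (le_of_lt hr0)
    rw [integral_const_mul] at hmono
    calc (∫ s in Set.Ioc a (2*a), s^r * f s) ≤ (2*a)^r * ∫ s in Set.Ioc a (2*a), f s := hmono
      _ ≤ (2*a)^r * F a := mul_le_mul_of_nonneg_left (hIocF a (2*a) (le_of_lt ha0) h2a) h2ar
      _ ≤ (2*a)^r * (C * a^(-q)) := mul_le_mul_of_nonneg_left (hbd a ha) h2ar
  have hge : ∀ n : ℕ, Tstar ≤ 2^n * Tstar := by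
    intro n
    have : (1:ℝ) ≤ 2^n := one_le_pow₀ one_le_two
    nlinarith
  -- inductive geometric bound
  have claim : ∀ n : ℕ, (∫ s in Set.Ioc Tstar (2^n * Tstar), s^r * f s) ≤ I * (1 - x0^n) := by
    intro n
    induction n with
    | zero => simp
    | succ n ih =>
      have ha := hge n
      have ha0 : (0:ℝ) < 2^n * Tstar := lt_of_lt_of_le hT ha
      have hbb : (2:ℝ)^n * Tstar ≤ 2^(n+1) * Tstar := by
        rw [pow_succ]
        nlinarith
      have hsplit : Set.Ioc Tstar ((2:ℝ)^(n+1) * Tstar)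
          = Set.Ioc Tstar ((2:ℝ)^n*Tstar) ∪ Set.Ioc ((2:ℝ)^n*Tstar) ((2:ℝ)^(n+1)*Tstar) :=
        (Set.Ioc_union_Ioc_eq_Ioc ha hbb).symm
      have hdisj : Disjoint (Set.Ioc Tstar ((2:ℝ)^n*Tstar))
          (Set.Ioc ((2:ℝ)^n*Tstar) ((2:ℝ)^(n+1)*Tstar)) :=
        (Set.Ioc_disjoint_Ioi le_rfl).mono_right Set.Ioc_subset_Ioi_self
      rw [hsplit, setIntegral_union hdisj measurableSet_Ioc
        (hgIoc Tstar _ le_rfl) (hgIoc _ _ ha)]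
      have hsecond : (∫ s in Set.Ioc ((2:ℝ)^n*Tstar) ((2:ℝ)^(n+1)*Tstar), s^r * f s)
          ≤ D * x0^n := by
        have h2 : (2:ℝ)^(n+1) * Tstar = 2 * ((2:ℝ)^n*Tstar) := by ring
        have h3 := hpiece ((2:ℝ)^n*Tstar) ha
        rw [h2]
        refine le_trans h3 (le_of_eq ?_)
        have e1 : (2*((2:ℝ)^n*Tstar))^r * (C * ((2:ℝ)^n*Tstar)^(-q))
            = 2^r * C * (((2:ℝ)^n*Tstar)^(r-q)) := by
          rw [Real.mul_rpow (by norm_num : (0:ℝ) ≤ 2) (le_of_lt ha0),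
            Real.rpow_sub ha0, Real.rpow_neg (le_of_lt ha0)]
          ring
        have e2 : (((2:ℝ)^n*Tstar)^(r-q)) = x0^n * Tstar^(r-q) := by
          rw [Real.mul_rpow (by positivity) (le_of_lt hT), ← Real.rpow_natCast (2:ℝ) n,
            ← Real.rpow_mul (by norm_num : (0:ℝ) ≤ 2), mul_comm (n:ℝ) (r-q),
            Real.rpow_mul (by norm_num : (0:ℝ) ≤ 2), Real.rpow_natCast, hx0def]
        rw [e1, e2, hDdef]
        ring
      have hDI : D = I * (1-x0) := by
        rw [hIdef, mul_assoc, inv_mul_cancel₀ (by linarith : (1:ℝ)-x0 ≠ 0), mul_one]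
      calc (∫ s in Set.Ioc Tstar ((2:ℝ)^n*Tstar), s^r * f s)
            + ∫ s in Set.Ioc ((2:ℝ)^n*Tstar) ((2:ℝ)^(n+1)*Tstar), s^r * f s
          ≤ I * (1 - x0^n) + D * x0^n := add_le_add ih hsecond
        _ = I * (1 - x0^(n+1)) := by rw [hDI]; ring
  -- integrability of the weighted function on the half line
  have hb : Filter.Tendsto (fun n : ℕ => (2:ℝ)^n * Tstar) Filter.atTop Filter.atTop :=
    (tendsto_pow_atTop_atTop_of_one_lt one_lt_two).atTop_mul_const hT
  have hg : IntegrableOn (fun s => s^r * f s) (Set.Ioi Tstar) := by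
    apply integrableOn_Ioi_of_intervalIntegral_norm_bounded I Tstar
      (fun n => hgIoc Tstar ((2:ℝ)^n*Tstar) le_rfl) hb
    filter_upwards with n
    rw [intervalIntegral.integral_of_le (hge n)]
    have heq : (∫ x in Set.Ioc Tstar ((2:ℝ)^n*Tstar), ‖x^r * f x‖)
        = ∫ x in Set.Ioc Tstar ((2:ℝ)^n*Tstar), x^r * f x := by
      apply setIntegral_congr_fun measurableSet_Ioc
      intro x hx
      have hx0 : (0:ℝ) ≤ x := le_trans (le_of_lt hT) (le_of_lt hx.1)
      show ‖x^r * f x‖ = x^r * f x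
      rw [Real.norm_eq_abs, abs_of_nonneg (mul_nonneg (Real.rpow_nonneg hx0 r) (hfnn x hx0))]
    rw [heq]
    have h6 : (0:ℝ) ≤ x0^n := pow_nonneg (le_of_lt hx00) n
    have h7 : 0 ≤ I * x0^n := mul_nonneg (le_of_lt hI0) h6
    have h8 := claim n
    linarith
  -- conclude by domination
  have hmeas : AEStronglyMeasurable (fun s => Real.sqrt (f s))
      (volume.restrict (Set.Ioi Tstar)) :=
    ((Real.continuous_sqrt.measurable).comp hfm).aestronglyMeasurable
  apply Integrable.mono' ((hinv.add hg).const_mul (2⁻¹ : ℝ)) hmeas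
  rw [ae_restrict_iff' measurableSet_Ioi]
  filter_upwards with s hs
  have hs0 : (0:ℝ) < s := lt_trans hT hs
  have h3 : (0:ℝ) ≤ s^(-r) := le_of_lt (Real.rpow_pos_of_pos hs0 _)
  have h4 : (0:ℝ) ≤ s^r * f s :=
    mul_nonneg (le_of_lt (Real.rpow_pos_of_pos hs0 _)) (hfnn s (le_of_lt hs0))
  have h1 : s^(-r) * (s^r * f s) = f s := by
    rw [← mul_assoc, ← Real.rpow_add hs0]
    norm_num
  have h2 := two_mul_le_add_sq (Real.sqrt (s^(-r))) (Real.sqrt (s^r * f s))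
  rw [Real.sq_sqrt h3, Real.sq_sqrt h4] at h2
  have h5 : Real.sqrt (f s) = Real.sqrt (s^(-r)) * Real.sqrt (s^r * f s) := by
    rw [← Real.sqrt_mul h3, h1]
  rw [Real.norm_eq_abs, abs_of_nonneg (Real.sqrt_nonneg _)]
  simp only [Pi.add_apply]
  linarith
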